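/- arXiv:1505.04955 — 9 statements merged into one kernel-verified Lean document; each statement's English description precedes it below -/
import Mathlib

section
/- There is no nonzero linear map V : ℂ² ⊗ ℂ² → ℂ² such that for all unit vectors |ψ⟩, |φ⟩ ∈ ℂ², V(|ψ⟩⊗|φ⟩) is a complex multiple of α|ψ⟩ + β z(ψ,φ)|φ⟩ for some unimodular complex number z(ψ,φ) (possibly depending on ψ, φ), where α, β are fixed nonzero complex numbers with |α|² + |β|² = 1. -/
open scoped TensorProduct InnerProductSpace

noncomputable def s : ℝ := Real.sqrt 2 / 2

lemma s_pos : 0 < s := by unfold s; positivity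

lemma s_sq : s ^ 2 = 1/2 := by
  unfold s; rw [div_pow, Real.sq_sqrt] <;> norm_num

lemma key (A B : ℂ) (h1 : ‖A+B‖^2 = 2*‖B‖^2) (h2 : ‖A-B‖^2 = 2*‖B‖^2)
    (h3 : ‖A+Complex.I*B‖^2 = 2*‖B‖^2) : A = 0 ∧ B = 0 := by
  simp only [Complex.sq_norm, Complex.normSq_apply, Complex.add_re,
    Complex.add_im, Complex.sub_re, Complex.sub_im, Complex.mul_re, Complex.mul_im,
    Complex.I_re, Complex.I_im] at h1 h2 h3
  have hB : Complex.normSq B = 0 := by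
    simp only [Complex.normSq_apply]
    nlinarith [sq_nonneg (A.re*B.re + A.im*B.im), sq_nonneg (A.im*B.re - A.re*B.im),
      sq_nonneg B.re, sq_nonneg B.im, sq_nonneg A.re, sq_nonneg A.im]
  have hA : Complex.normSq A = 0 := by
    simp only [Complex.normSq_apply]
    have := Complex.normSq_apply B ▸ hB
    nlinarith [sq_nonneg (A.re+B.re), sq_nonneg B.re, sq_nonneg B.im]
  exact ⟨Complex.normSq_eq_zero.mp hA, Complex.normSq_eq_zero.mp hB⟩

lemma scalar (α β lam C₁ z₁ : ℂ) (hα : α ≠ 0) (hβ : β ≠ 0) (hz₁ : ‖z₁‖ = 1)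
    (hU : ∀ u : ℂ, ‖u‖ = 1 → ∃ Cu zu : ℂ, ‖zu‖ = 1 ∧ C₁ * z₁ = Cu * zu ∧
      (s:ℂ) * (lam + u * (C₁ * α)) = Cu * α + Cu * (β * zu) * (s:ℂ)) :
    C₁ = 0 ∧ lam = 0 := by
  have main : ∀ u : ℂ, ‖u‖ = 1 →
      ‖(lam - C₁ * z₁ * β) + u * (C₁ * α)‖ ^ 2 = 2 * ‖C₁ * α‖ ^ 2 := by
    intro u hu
    obtain ⟨Cu, zu, hzu, hCz, heq⟩ := hU u hu
    have hCuα : Cu * α = (s:ℂ) * ((lam - C₁ * z₁ * β) + u * (C₁ * α)) := by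
      linear_combination (β * (s:ℂ)) * hCz - heq
    have hCu : ‖Cu‖ = ‖C₁‖ := by
      have := congrArg norm hCz
      rw [norm_mul, norm_mul, hzu, hz₁, mul_one, mul_one] at this
      exact this.symm
    have hn : ‖C₁‖ * ‖α‖ = s * ‖(lam - C₁ * z₁ * β) + u * (C₁ * α)‖ := by
      have := congrArg norm hCuα
      rwa [norm_mul, norm_mul, hCu, Complex.norm_real, Real.norm_eq_abs,
        abs_of_pos s_pos] at this
    have hBnorm : ‖C₁ * α‖ = ‖C₁‖ * ‖α‖ := norm_mul _ _
    have hs2 := s_sq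
    nlinarith [norm_nonneg ((lam - C₁ * z₁ * β) + u * (C₁ * α)), norm_nonneg (C₁ * α), s_pos]
  have h1 := main 1 (by simp)
  have h2 := main (-1) (by simp)
  have h3 := main Complex.I (by simp)
  rw [one_mul] at h1
  rw [neg_one_mul, ← sub_eq_add_neg] at h2
  obtain ⟨hA0, hB0⟩ := key _ _ h1 h2 h3
  have hC₁ : C₁ = 0 := by
    rcases mul_eq_zero.mp hB0 with h | h
    · exact h
    · exact absurd h hα
  refine ⟨hC₁, ?_⟩
  rw [hC₁] at hA0
  simpa using hA0

lemma slot {E : Type*} [NormedAddCommGroup E] [InnerProductSpace ℂ E]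
    (α β : ℂ) (hα : α ≠ 0) (hβ : β ≠ 0) (a b : E)
    (ha : ‖a‖ = 1) (hb : ‖b‖ = 1) (hab : ⟪a, b⟫_ℂ = 0) (P Q : E)
    (hP : ∃ C z : ℂ, ‖z‖ = 1 ∧ P = C • (α • a + (β * z) • a))
    (hQ : ∃ C z : ℂ, ‖z‖ = 1 ∧ Q = C • (α • a + (β * z) • b))
    (hU : ∀ u : ℂ, ‖u‖ = 1 → ∃ C z : ℂ, ‖z‖ = 1 ∧
      ((s:ℝ):ℂ) • (P + u • Q) = C • (α • a + (β * z) • (((s:ℝ):ℂ) • (a + u • b)))) :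
    P = 0 ∧ Q = 0 := by
  have haa : ⟪a, a⟫_ℂ = 1 := by
    rw [inner_self_eq_norm_sq_to_K, ha]; norm_num
  have hbb : ⟪b, b⟫_ℂ = 1 := by
    rw [inner_self_eq_norm_sq_to_K, hb]; norm_num
  have hba : ⟪b, a⟫_ℂ = 0 := by
    rw [← inner_conj_symm, hab, map_zero]
  obtain ⟨C0, z0, hz0, hPe⟩ := hP
  obtain ⟨C₁, z₁, hz₁, hQe⟩ := hQ
  have hPe' : P = (C0 * (α + β * z0)) • a := by
    rw [hPe, ← add_smul, smul_smul]
  have hs0 : (s:ℂ) ≠ 0 := by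
    simp [Complex.ofReal_ne_zero, ne_of_gt s_pos]
  have main := scalar α β (C0 * (α + β * z0)) C₁ z₁ hα hβ hz₁ ?_
  · refine ⟨?_, ?_⟩
    · rw [hPe', main.2, zero_smul]
    · rw [hQe, main.1, zero_smul]
  · intro u hu
    have hu0 : u ≠ 0 := by intro h; rw [h] at hu; simp at hu
    obtain ⟨Cu, zu, hzu, heq⟩ := hU u hu
    rw [hPe', hQe] at heq
    have eb := congrArg (fun v => ⟪b, v⟫_ℂ) heq
    simp only [inner_add_right, inner_smul_right, haa, hba, hab,
      hbb, Complex.ofReal_one, one_pow, mul_zero, zero_mul,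
      mul_one, one_mul, zero_add, add_zero] at eb
    have ea := congrArg (fun v => ⟪a, v⟫_ℂ) heq
    simp only [inner_add_right, inner_smul_right, haa, hba, hab,
      hbb, Complex.ofReal_one, one_pow, mul_zero, zero_mul,
      mul_one, one_mul, zero_add, add_zero] at ea
    refine ⟨Cu, zu, hzu, ?_, ?_⟩
    · have hz : ((s:ℂ) * u * β) * (C₁ * z₁ - Cu * zu) = 0 := by
        linear_combination eb
      rcases mul_eq_zero.mp hz with h | h
      · rcases mul_eq_zero.mp h with h' | h'
        · rcases mul_eq_zero.mp h' with h'' | h''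
          · exact absurd h'' hs0
          · exact absurd h'' hu0
        · exact absurd h' hβ
      · exact sub_eq_zero.mp h
    · linear_combination ea

lemma comb_norm {E : Type*} [NormedAddCommGroup E] [InnerProductSpace ℂ E]
    (a b : E) (ha : ‖a‖ = 1) (hb : ‖b‖ = 1) (hab : ⟪a, b⟫_ℂ = 0)
    (u : ℂ) (hu : ‖u‖ = 1) : ‖((s:ℝ):ℂ) • (a + u • b)‖ = 1 := by
  have h1 : ⟪a, u • b⟫_ℂ = 0 := by rw [inner_smul_right, hab, mul_zero]
  have h2 : ‖a + u • b‖ ^ 2 = 2 := by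
    rw [norm_add_sq (𝕜 := ℂ), h1, norm_smul, ha, hb, hu]
    norm_num
  have h3 : ‖((s:ℝ):ℂ) • (a + u • b)‖ ^ 2 = 1 := by
    rw [norm_smul, mul_pow, Complex.norm_real, Real.norm_eq_abs, abs_of_pos s_pos,
      h2, s_sq]
    norm_num
  nlinarith [norm_nonneg (((s:ℝ):ℂ) • (a + u • b))]

/-- No-go theorem (qubit case): there is no nonzero linear map `V : ℂ²⊗ℂ² → ℂ²`
producing, for every pair of unit vectors `ψ, φ`, a multiple of the superposition
`α•ψ + β•z(ψ,φ)•φ` with `z(ψ,φ)` unimodular. -/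
theorem no_universal_superposer
    (α β : ℂ) (hα : α ≠ 0) (hβ : β ≠ 0) (hnorm : ‖α‖ ^ 2 + ‖β‖ ^ 2 = 1)
    (V : (EuclideanSpace ℂ (Fin 2)) ⊗[ℂ] (EuclideanSpace ℂ (Fin 2)) →ₗ[ℂ]
        EuclideanSpace ℂ (Fin 2))
    (h : ∀ ψ φ : EuclideanSpace ℂ (Fin 2), ‖ψ‖ = 1 → ‖φ‖ = 1 →
      ∃ C z : ℂ, ‖z‖ = 1 ∧ V (ψ ⊗ₜ[ℂ] φ) = C • (α • ψ + (β * z) • φ)) :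
    V = 0 := by
  set e : Fin 2 → EuclideanSpace ℂ (Fin 2) := fun i => EuclideanSpace.single i 1 with he
  have hnorme : ∀ i, ‖e i‖ = 1 := by
    intro i; simp [he, EuclideanSpace.norm_single]
  have hinner : ∀ i j : Fin 2, i ≠ j → ⟪e i, e j⟫_ℂ = 0 := by
    intro i j hij
    simp [he, EuclideanSpace.inner_single_left, EuclideanSpace.single_apply, hij.symm]
  -- the slot argument for a fixed first index i and second index j ≠ i
  have hzero : ∀ i j : Fin 2, i ≠ j →
      V (e i ⊗ₜ[ℂ] e i) = 0 ∧ V (e i ⊗ₜ[ℂ] e j) = 0 := by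
    intro i j hij
    refine slot α β hα hβ (e i) (e j) (hnorme i) (hnorme j) (hinner i j hij)
      (V (e i ⊗ₜ[ℂ] e i)) (V (e i ⊗ₜ[ℂ] e j)) (h _ _ (hnorme i) (hnorme i))
      (h _ _ (hnorme i) (hnorme j)) ?_
    intro u hu
    obtain ⟨C, z, hz, hVeq⟩ := h (e i) (((s:ℝ):ℂ) • (e i + u • e j)) (hnorme i)
      (comb_norm _ _ (hnorme i) (hnorme j) (hinner i j hij) u hu)
    refine ⟨C, z, hz, ?_⟩
    rw [← hVeq]
    rw [TensorProduct.tmul_smul, TensorProduct.tmul_add, TensorProduct.tmul_smul,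
      map_smul, map_add, map_smul]
  have h00 := (hzero 0 1 (by decide)).1
  have h01 := (hzero 0 1 (by decide)).2
  have h11 := (hzero 1 0 (by decide)).1
  have h10 := (hzero 1 0 (by decide)).2
  apply TensorProduct.ext'
  intro x y
  have hdx : x = x 0 • e 0 + x 1 • e 1 := by
    ext k; fin_cases k <;>
      simp [he, EuclideanSpace.single_apply, PiLp.add_apply, PiLp.smul_apply]
  have hdy : y = y 0 • e 0 + y 1 • e 1 := by
    ext k; fin_cases k <;>
      simp [he, EuclideanSpace.single_apply, PiLp.add_apply, PiLp.smul_apply]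
  rw [hdx, hdy]
  simp only [TensorProduct.add_tmul, TensorProduct.tmul_add, TensorProduct.smul_tmul,
    TensorProduct.tmul_smul, map_add, map_smul, h00, h01, h10, h11, smul_zero, add_zero,
    LinearMap.zero_apply]
end

section
/- Let V : ℂ² ⊗ ℂ² → ℂ² be a linear map such that for every unit vector |ψ⟩ ∈ ℂ², the vector V(|ψ⟩⊗|ψ⟩) is orthogonal to every vector perpendicular to |ψ⟩ (i.e., V(|ψ⟩⊗|ψ⟩) ∝ |ψ⟩). Then there exist vectors |χ₁⟩, |χ₂⟩ ∈ ℂ² such that V(|ψ⟩⊗|φ⟩) = ⟨χ₁|φ⟩|ψ⟩ + ⟨χ₂|ψ⟩|φ⟩ for all |ψ⟩, |φ⟩ ∈ ℂ². -/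
open scoped TensorProduct

/-- If a linear map `V : ℂ²⊗ℂ² → ℂ²` satisfies `V(ψ⊗ψ) ∝ ψ` for every unit vector
`ψ`, then there are vectors `χ₁, χ₂` such that
`V(ψ⊗φ) = ⟨χ₁|φ⟩ψ + ⟨χ₂|ψ⟩φ` for all `ψ, φ`. -/
theorem diagonal_proportional_implies_braket_form
    (V : (EuclideanSpace ℂ (Fin 2)) ⊗[ℂ] (EuclideanSpace ℂ (Fin 2)) →ₗ[ℂ]
        EuclideanSpace ℂ (Fin 2))
    (h : ∀ ψ : EuclideanSpace ℂ (Fin 2), ‖ψ‖ = 1 → ∃ c : ℂ, V (ψ ⊗ₜ[ℂ] ψ) = c • ψ) :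
    ∃ χ₁ χ₂ : EuclideanSpace ℂ (Fin 2),
      ∀ ψ φ : EuclideanSpace ℂ (Fin 2),
        V (ψ ⊗ₜ[ℂ] φ) = (inner ℂ χ₁ φ : ℂ) • ψ + (inner ℂ χ₂ ψ : ℂ) • φ := by
  set e0 : EuclideanSpace ℂ (Fin 2) := EuclideanSpace.single 0 1 with he0
  set e1 : EuclideanSpace ℂ (Fin 2) := EuclideanSpace.single 1 1 with he1
  have e00 : e0 0 = 1 := by simp [he0]
  have e01 : e0 1 = 0 := by simp [he0]
  have e10 : e1 0 = 0 := by simp [he1]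
  have e11 : e1 1 = 1 := by simp [he1]
  have h' : ∀ ψ : EuclideanSpace ℂ (Fin 2), ψ ≠ 0 → ∃ c : ℂ, V (ψ ⊗ₜ[ℂ] ψ) = c • ψ := by
    intro ψ hψ
    set r : ℂ := (‖ψ‖ : ℂ)⁻¹ with hr
    have hn : ‖ψ‖ ≠ 0 := norm_ne_zero_iff.2 hψ
    have hrne : r ≠ 0 := by simp [hr, hn]
    have hnorm : ‖r • ψ‖ = 1 := by
      rw [norm_smul]; simp [hr, hn]
    obtain ⟨c, hc⟩ := h (r • ψ) hnorm
    have hexp : (r * r) • V (ψ ⊗ₜ[ℂ] ψ) = (c * r) • ψ := by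
      calc (r * r) • V (ψ ⊗ₜ[ℂ] ψ) = V ((r * r) • (ψ ⊗ₜ[ℂ] ψ)) := (map_smul V _ _).symm
        _ = V ((r • ψ) ⊗ₜ[ℂ] (r • ψ)) := by rw [TensorProduct.smul_tmul_smul]
        _ = c • r • ψ := hc
        _ = (c * r) • ψ := smul_smul c r ψ
    refine ⟨(r * r)⁻¹ * (c * r), ?_⟩
    calc V (ψ ⊗ₜ[ℂ] ψ) = (r * r)⁻¹ • ((r * r) • V (ψ ⊗ₜ[ℂ] ψ)) :=
          (inv_smul_smul₀ (mul_ne_zero hrne hrne) _).symm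
      _ = (r * r)⁻¹ • ((c * r) • ψ) := by rw [hexp]
      _ = ((r * r)⁻¹ * (c * r)) • ψ := smul_smul _ _ _
  have hdecomp : ∀ ψ : EuclideanSpace ℂ (Fin 2), ψ = ψ 0 • e0 + ψ 1 • e1 := by
    intro ψ; ext i; fin_cases i <;> simp [he0, he1]
  have hVexp : ∀ x y : EuclideanSpace ℂ (Fin 2),
      V (x ⊗ₜ[ℂ] y) = (x 0 * y 0) • V (e0 ⊗ₜ[ℂ] e0) + (x 0 * y 1) • V (e0 ⊗ₜ[ℂ] e1)
        + (x 1 * y 0) • V (e1 ⊗ₜ[ℂ] e0) + (x 1 * y 1) • V (e1 ⊗ₜ[ℂ] e1) := by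
    intro x y
    conv_lhs => rw [hdecomp x, hdecomp y]
    simp only [TensorProduct.add_tmul, TensorProduct.tmul_add, ← TensorProduct.smul_tmul',
      TensorProduct.tmul_smul, map_add, map_smul, smul_smul]
    module
  have hne0 : e0 ≠ 0 := by
    intro hz
    have h0 : e0 0 = (0 : EuclideanSpace ℂ (Fin 2)) 0 := by rw [hz]
    rw [e00] at h0; simp at h0
  have hne1 : e1 ≠ 0 := by
    intro hz
    have h0 : e1 1 = (0 : EuclideanSpace ℂ (Fin 2)) 1 := by rw [hz]
    rw [e11] at h0; simp at h0
  have hnep : (e0 + e1 : EuclideanSpace ℂ (Fin 2)) ≠ 0 := by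
    intro hz
    have h0 : (e0 + e1) 0 = (0 : EuclideanSpace ℂ (Fin 2)) 0 := by rw [hz]
    rw [PiLp.add_apply, e00, e10] at h0; simp at h0
  have hnei : (e0 + Complex.I • e1 : EuclideanSpace ℂ (Fin 2)) ≠ 0 := by
    intro hz
    have h0 : (e0 + Complex.I • e1) 0 = (0 : EuclideanSpace ℂ (Fin 2)) 0 := by rw [hz]
    rw [PiLp.add_apply, PiLp.smul_apply, e00, e10] at h0; simp at h0
  obtain ⟨c0, hc0⟩ := h' e0 hne0
  obtain ⟨c1, hc1⟩ := h' e1 hne1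
  obtain ⟨cp, hcp⟩ := h' (e0 + e1) hnep
  obtain ⟨ci, hci⟩ := h' (e0 + Complex.I • e1) hnei
  have E001 : V (e0 ⊗ₜ[ℂ] e0) 1 = 0 := by
    have h0 : V (e0 ⊗ₜ[ℂ] e0) 1 = (c0 • e0) 1 := by rw [hc0]
    rwa [PiLp.smul_apply, e01, smul_eq_mul, mul_zero] at h0
  have E110 : V (e1 ⊗ₜ[ℂ] e1) 0 = 0 := by
    have h0 : V (e1 ⊗ₜ[ℂ] e1) 0 = (c1 • e1) 0 := by rw [hc1]
    rwa [PiLp.smul_apply, e10, smul_eq_mul, mul_zero] at h0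
  have Hp := (hVexp (e0 + e1) (e0 + e1)).symm.trans hcp
  have Hi := (hVexp (e0 + Complex.I • e1) (e0 + Complex.I • e1)).symm.trans hci
  have Ep0 : V (e0 ⊗ₜ[ℂ] e0) 0 + V (e0 ⊗ₜ[ℂ] e1) 0 + V (e1 ⊗ₜ[ℂ] e0) 0
      + V (e1 ⊗ₜ[ℂ] e1) 0 = cp := by
    have h0 := congrArg (fun f : EuclideanSpace ℂ (Fin 2) => f 0) Hp
    simpa [PiLp.add_apply, PiLp.smul_apply, e00, e01, e10, e11] using h0
  have Ep1 : V (e0 ⊗ₜ[ℂ] e0) 1 + V (e0 ⊗ₜ[ℂ] e1) 1 + V (e1 ⊗ₜ[ℂ] e0) 1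
      + V (e1 ⊗ₜ[ℂ] e1) 1 = cp := by
    have h0 := congrArg (fun f : EuclideanSpace ℂ (Fin 2) => f 1) Hp
    simpa [PiLp.add_apply, PiLp.smul_apply, e00, e01, e10, e11] using h0
  have Ei0 : V (e0 ⊗ₜ[ℂ] e0) 0 + Complex.I * V (e0 ⊗ₜ[ℂ] e1) 0 + Complex.I * V (e1 ⊗ₜ[ℂ] e0) 0
      + (Complex.I * Complex.I) * V (e1 ⊗ₜ[ℂ] e1) 0 = ci := by
    have h0 := congrArg (fun f : EuclideanSpace ℂ (Fin 2) => f 0) Hi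
    simp only [PiLp.add_apply, PiLp.smul_apply, smul_eq_mul, e00, e01, e10, e11,
      mul_zero, mul_one, zero_mul, one_mul, add_zero, zero_add, mul_assoc] at h0
    linear_combination h0
  have Ei1 : V (e0 ⊗ₜ[ℂ] e0) 1 + Complex.I * V (e0 ⊗ₜ[ℂ] e1) 1 + Complex.I * V (e1 ⊗ₜ[ℂ] e0) 1
      + (Complex.I * Complex.I) * V (e1 ⊗ₜ[ℂ] e1) 1 = ci * Complex.I := by
    have h0 := congrArg (fun f : EuclideanSpace ℂ (Fin 2) => f 1) Hi
    simp only [PiLp.add_apply, PiLp.smul_apply, smul_eq_mul, e00, e01, e10, e11,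
      mul_zero, mul_one, zero_mul, one_mul, add_zero, zero_add, mul_assoc] at h0
    linear_combination h0
  have hII : Complex.I * Complex.I = -1 := Complex.I_mul_I
  have hden : (1 : ℂ) + Complex.I ≠ 0 := by
    intro hz
    have := congrArg Complex.im hz
    simp at this
  have key1 : V (e1 ⊗ₜ[ℂ] e1) 1 = V (e0 ⊗ₜ[ℂ] e1) 0 + V (e1 ⊗ₜ[ℂ] e0) 0 := by
    have hcomb : (1 + Complex.I) * (V (e1 ⊗ₜ[ℂ] e1) 1 - (V (e0 ⊗ₜ[ℂ] e1) 0 + V (e1 ⊗ₜ[ℂ] e0) 0)) = 0 := by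
      linear_combination Complex.I * Ei0 - Ei1 - Complex.I * Ep0 + Complex.I * Ep1
        - (V (e0 ⊗ₜ[ℂ] e1) 0 + V (e1 ⊗ₜ[ℂ] e0) 0) * hII + 2 * Complex.I * E110
        - (Complex.I - 1) * E001 + V (e1 ⊗ₜ[ℂ] e1) 1 * hII + (-Complex.I - Complex.I^3) * E110
    have := (mul_eq_zero.mp hcomb).resolve_left hden
    linear_combination this
  have key2 : V (e0 ⊗ₜ[ℂ] e0) 0 = V (e0 ⊗ₜ[ℂ] e1) 1 + V (e1 ⊗ₜ[ℂ] e0) 1 := by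
    linear_combination Ep0 - Ep1 + key1 - E110 + E001
  refine ⟨(WithLp.equiv 2 (Fin 2 → ℂ)).symm
      ![(starRingEnd ℂ) (V (e0 ⊗ₜ[ℂ] e0) 0 - V (e0 ⊗ₜ[ℂ] e1) 1), (starRingEnd ℂ) (V (e0 ⊗ₜ[ℂ] e1) 0)],
    (WithLp.equiv 2 (Fin 2 → ℂ)).symm
      ![(starRingEnd ℂ) (V (e0 ⊗ₜ[ℂ] e1) 1), (starRingEnd ℂ) (V (e1 ⊗ₜ[ℂ] e1) 1 - V (e0 ⊗ₜ[ℂ] e1) 0)], ?_⟩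
  intro ψ φ
  rw [hVexp ψ φ]
  ext i
  fin_cases i
  · simp only [PiLp.add_apply, PiLp.smul_apply, smul_eq_mul, PiLp.inner_apply,
      RCLike.inner_apply, Fin.sum_univ_two, WithLp.equiv_symm_apply, PiLp.toLp_apply,
      Matrix.cons_val_zero, Matrix.cons_val_one, Matrix.head_cons, map_sub,
      Complex.conj_conj, Fin.isValue, Fin.mk_zero, Fin.mk_one]
    linear_combination (ψ 1 * φ 1) * E110 - (ψ 1 * φ 0) * key1
  · simp only [PiLp.add_apply, PiLp.smul_apply, smul_eq_mul, PiLp.inner_apply,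
      RCLike.inner_apply, Fin.sum_univ_two, WithLp.equiv_symm_apply, PiLp.toLp_apply,
      Matrix.cons_val_zero, Matrix.cons_val_one, Matrix.head_cons, map_sub,
      Complex.conj_conj, Fin.isValue, Fin.mk_zero, Fin.mk_one]
    linear_combination (ψ 0 * φ 0) * E001 - (ψ 1 * φ 0) * key2
end

section
/- Let |χ₁⟩, |χ₂⟩ ∈ ℂ² and define V(ψ⊗φ) = ⟨χ₁|φ⟩ψ + ⟨χ₂|ψ⟩φ. Fix nonzero α, β ∈ ℂ. If for all unit vectors ψ, φ ∈ ℂ² there exist a scalar C(ψ,φ) ∈ ℂ and a unimodular scalar Z(ψ,φ) with V(ψ⊗φ) = C(ψ,φ)(α ψ + β Z(ψ,φ) φ), then χ₁ = 0 and χ₂ = 0 (hence V = 0). -/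
lemma braket_aux_ab (a b : ℂ) (h1 : ‖a+b‖ = Real.sqrt 2 * ‖b‖)
    (h2 : ‖a-b‖ = Real.sqrt 2 * ‖b‖)
    (h3 : ‖a + b * Complex.I‖ = Real.sqrt 2 * ‖b‖) : a = 0 ∧ b = 0 := by
  have key : ∀ z : ℂ, ‖z‖^2 = z.re^2 + z.im^2 := by
    intro z
    rw [Complex.sq_norm, Complex.normSq_apply]; ring
  have hs2 : Real.sqrt 2 ^ 2 = 2 := Real.sq_sqrt (by norm_num)
  have sq1 : ‖a+b‖^2 = 2 * ‖b‖^2 := by rw [h1, mul_pow, hs2]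
  have sq2 : ‖a-b‖^2 = 2 * ‖b‖^2 := by rw [h2, mul_pow, hs2]
  have sq3 : ‖a + b*Complex.I‖^2 = 2 * ‖b‖^2 := by rw [h3, mul_pow, hs2]
  rw [key, key] at sq1 sq2 sq3
  simp [Complex.add_re, Complex.add_im, Complex.sub_re, Complex.sub_im,
    Complex.mul_re, Complex.mul_im, Complex.I_re, Complex.I_im] at sq1 sq2 sq3
  have hre : a.re*b.re + a.im*b.im = 0 := by linear_combination (sq1 - sq2)/4
  have hab : a.re^2 + a.im^2 = b.re^2 + b.im^2 := by linear_combination (sq1 + sq2)/2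
  have him : a.im*b.re - a.re*b.im = 0 := by linear_combination sq3/2 - hab/2
  have hz : (a.re^2+a.im^2) * (b.re^2+b.im^2) = 0 := by
    linear_combination (a.re*b.re + a.im*b.im)*hre + (a.im*b.re - a.re*b.im)*him
  have hb2 : (b.re^2+b.im^2)^2 = 0 := by
    linear_combination hz - (b.re^2+b.im^2) * hab
  have hQ : b.re^2 + b.im^2 = 0 := by
    exact pow_eq_zero_iff (by norm_num) |>.mp hb2
  have hP : a.re^2 + a.im^2 = 0 := by rw [hab]; exact hQ
  have hsum : ∀ x y : ℝ, x^2 + y^2 = 0 → x = 0 ∧ y = 0 := fun x y hxy =>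
    ⟨by nlinarith [sq_nonneg y], by nlinarith [sq_nonneg x]⟩
  obtain ⟨ha1, ha2⟩ := hsum _ _ hP
  obtain ⟨hb1, hb2'⟩ := hsum _ _ hQ
  exact ⟨Complex.ext (by simp [ha1]) (by simp [ha2]),
    Complex.ext (by simp [hb1]) (by simp [hb2'])⟩

/-- If the map `V(ψ⊗φ) = ⟨χ₁|φ⟩ψ + ⟨χ₂|ψ⟩φ` produces, for all unit vectors `ψ, φ`,
a multiple of `αψ + βZ(ψ,φ)φ` with `Z` unimodular (α, β fixed nonzero), then
`χ₁ = 0` and `χ₂ = 0`. -/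
theorem braket_form_superposer_is_zero
    (χ₁ χ₂ : EuclideanSpace ℂ (Fin 2))
    (α β : ℂ) (hα : α ≠ 0) (hβ : β ≠ 0) (hnorm : ‖α‖ ^ 2 + ‖β‖ ^ 2 = 1)
    (h : ∀ ψ φ : EuclideanSpace ℂ (Fin 2), ‖ψ‖ = 1 → ‖φ‖ = 1 →
      ∃ C Z : ℂ, ‖Z‖ = 1 ∧
        (inner ℂ χ₁ φ : ℂ) • ψ + (inner ℂ χ₂ ψ : ℂ) • φ = C • (α • ψ + (β * Z) • φ)) :
    χ₁ = 0 ∧ χ₂ = 0 := by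
  have hnv : ∀ x y : ℂ, ‖x‖^2 + ‖y‖^2 = 1 →
      ‖((WithLp.equiv 2 (Fin 2 → ℂ)).symm ![x,y] : EuclideanSpace ℂ (Fin 2))‖ = 1 := by
    intro x y hxy
    rw [EuclideanSpace.norm_eq]
    simp only [WithLp.equiv_symm_apply, PiLp.toLp_apply, Fin.sum_univ_two, Matrix.cons_val_zero,
      Matrix.cons_val_one, Matrix.head_cons]
    rw [hxy, Real.sqrt_one]
  have main : ∀ x y : ℂ, ‖x‖^2+‖y‖^2 = 1 → y ≠ 0 →
      ‖(starRingEnd ℂ) (χ₁ 0) * x + (starRingEnd ℂ) (χ₁ 1) * y‖ * ‖β‖ = ‖χ₂ 0‖ * ‖α‖ := by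
    intro x y hxy hy
    obtain ⟨C, Z, hZ, hE⟩ := h ((WithLp.equiv 2 _).symm ![1,0]) ((WithLp.equiv 2 _).symm ![x,y])
      (hnv 1 0 (by norm_num)) (hnv x y hxy)
    have h0 := congrArg (· 0) hE
    have h1 := congrArg (· 1) hE
    simp only [PiLp.inner_apply, RCLike.inner_apply, Fin.sum_univ_two, PiLp.add_apply,
      PiLp.smul_apply, WithLp.equiv_symm_apply, PiLp.toLp_apply, Matrix.cons_val_zero, Matrix.cons_val_one,
      Matrix.head_cons, smul_eq_mul, mul_one, mul_zero, add_zero, zero_add] at h0 h1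
    have h1' : (starRingEnd ℂ) (χ₂ 0) = C * β * Z :=
      mul_right_cancel₀ hy (by linear_combination h1)
    have h0' : (starRingEnd ℂ) (χ₁ 0) * x + (starRingEnd ℂ) (χ₁ 1) * y = C * α := by
      linear_combination h0 - x * h1'
    rw [h0', norm_mul]
    have h2 : ‖χ₂ 0‖ = ‖C‖ * ‖β‖ := by
      rw [← RCLike.norm_conj (χ₂ 0), h1', norm_mul, norm_mul, hZ, mul_one]
    rw [h2]; ring
  have e1 : ‖χ₁ 1‖ * ‖β‖ = ‖χ₂ 0‖ * ‖α‖ := by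
    simpa [RCLike.norm_conj] using main 0 1 (by norm_num) one_ne_zero
  set t : ℂ := (((Real.sqrt 2)⁻¹ : ℝ) : ℂ) with ht
  have htn : ‖t‖ = (Real.sqrt 2)⁻¹ := by
    rw [ht, Complex.norm_real, Real.norm_eq_abs, abs_of_nonneg (by positivity)]
  have htn2 : ‖t‖^2 = 1/2 := by
    rw [htn, inv_pow, Real.sq_sqrt (by norm_num)]; norm_num
  have ht0 : t ≠ 0 := by
    rw [ht]
    exact Complex.ofReal_ne_zero.mpr (inv_ne_zero (Real.sqrt_ne_zero'.mpr (by norm_num)))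
  set a : ℂ := (starRingEnd ℂ) (χ₁ 0) with ha
  set b : ℂ := (starRingEnd ℂ) (χ₁ 1) with hb
  have hbn : ‖b‖ = ‖χ₁ 1‖ := RCLike.norm_conj _
  have cancel : ∀ u : ℂ, ‖u * t‖ * ‖β‖ = ‖χ₂ 0‖ * ‖α‖ → ‖u‖ = Real.sqrt 2 * ‖b‖ := by
    intro u hu
    rw [norm_mul, htn] at hu
    rw [← e1, ← hbn] at hu
    have hβn : ‖β‖ ≠ 0 := norm_ne_zero_iff.mpr hβ
    have h' : ‖u‖ * (Real.sqrt 2)⁻¹ = ‖b‖ := mul_right_cancel₀ hβn hu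
    have hs : Real.sqrt 2 ≠ 0 := by positivity
    field_simp at h' ⊢
    linarith [h']
  have e2 : ‖a + b‖ = Real.sqrt 2 * ‖b‖ := by
    apply cancel
    have := main t t (by rw [htn2]; norm_num) ht0
    rw [show a * t + b * t = (a+b) * t by ring] at this
    exact this
  have e3 : ‖a - b‖ = Real.sqrt 2 * ‖b‖ := by
    apply cancel
    have := main t (-t) (by rw [norm_neg, htn2]; norm_num) (neg_ne_zero.mpr ht0)
    rw [show a * t + b * (-t) = (a-b) * t by ring] at this
    exact this
  have e4 : ‖a + b * Complex.I‖ = Real.sqrt 2 * ‖b‖ := by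
    apply cancel
    have := main t (t * Complex.I) (by rw [norm_mul, Complex.norm_I, mul_one, htn2]; norm_num) 
      (mul_ne_zero ht0 Complex.I_ne_zero)
    rw [show a * t + b * (t * Complex.I) = (a + b * Complex.I) * t by ring] at this
    exact this
  obtain ⟨ha0, hb0⟩ := braket_aux_ab a b e2 e3 e4
  have hχ10 : χ₁ 0 = 0 := (map_eq_zero _).mp ha0
  have hχ11 : χ₁ 1 = 0 := (map_eq_zero _).mp hb0
  have hχ20 : χ₂ 0 = 0 := by
    rw [hχ11] at e1
    simp at e1
    rcases e1 with e1 | e1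
    · exact e1
    · exact absurd e1 hα
  have hχ21 : χ₂ 1 = 0 := by
    obtain ⟨C, Z, hZ, hE⟩ := h ((WithLp.equiv 2 _).symm ![0,1]) ((WithLp.equiv 2 _).symm ![1,0])
      (hnv 0 1 (by norm_num)) (hnv 1 0 (by norm_num))
    have h0 := congrArg (· 0) hE
    have h1 := congrArg (· 1) hE
    simp only [PiLp.inner_apply, RCLike.inner_apply, Fin.sum_univ_two, PiLp.add_apply,
      PiLp.smul_apply, WithLp.equiv_symm_apply, PiLp.toLp_apply, Matrix.cons_val_zero, Matrix.cons_val_one,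
      Matrix.head_cons, smul_eq_mul, mul_one, mul_zero, add_zero, zero_add] at h0 h1
    rw [hχ10] at h1
    simp at h1
    rcases h1 with h1 | h1
    · rw [h1] at h0
      simp at h0
      simpa using h0
    · exact absurd h1 hα
  constructor
  · ext i
    fin_cases i
    · simpa using hχ10
    · simpa using hχ11
  · ext i
    fin_cases i
    · simpa using hχ20
    · simpa using hχ21
end

section
/- The superposition vector Ψ(ψ,φ) = α(⟨χ|φ⟩/|⟨χ|φ⟩|)ψ + β(⟨χ|ψ⟩/|⟨χ|ψ⟩|)φ is covariant under phase changes: replacing ψ by e^{iθ₁}ψ, φ by e^{iθ₂}φ, and χ by e^{iθ₃}χ changes Ψ only by a global phase factor. Consequently the map (P_ψ, P_φ) ↦ |Ψ⟩⟨Ψ| is a well-defined function of the projectors P_ψ, P_φ (given fixed P_χ). -/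
/-- The superposition vector `Ψ(χ;ψ,φ) = α(⟨χ|φ⟩/|⟨χ|φ⟩|)ψ + β(⟨χ|ψ⟩/|⟨χ|ψ⟩|)φ`. -/
noncomputable def supVec {H : Type*} [NormedAddCommGroup H] [InnerProductSpace ℂ H]
    (α β : ℂ) (χ ψ φ : H) : H :=
  (α * ((inner ℂ χ φ : ℂ) / (‖(inner ℂ χ φ : ℂ)‖ : ℂ))) • ψ
    + (β * ((inner ℂ χ ψ : ℂ) / (‖(inner ℂ χ ψ : ℂ)‖ : ℂ))) • φ

/-- Phase covariance of the superposition: replacing `ψ, φ, χ` by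
`e^{iθ₁}ψ, e^{iθ₂}φ, e^{iθ₃}χ` changes `Ψ` only by a global phase; hence
`(P_ψ, P_φ) ↦ |Ψ⟩⟨Ψ|` is a well-defined function of the projectors. -/
theorem supVec_phase_covariant
    {H : Type*} [NormedAddCommGroup H] [InnerProductSpace ℂ H]
    (α β : ℂ) (χ ψ φ : H) (hψ : ‖ψ‖ = 1) (hφ : ‖φ‖ = 1) (hχ : ‖χ‖ = 1)
    (h₁ : (inner ℂ χ ψ : ℂ) ≠ 0) (h₂ : (inner ℂ χ φ : ℂ) ≠ 0) :
    ∀ θ₁ θ₂ θ₃ : ℝ, ∃ θ : ℝ,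
      supVec α β (Complex.exp (θ₃ * Complex.I) • χ)
          (Complex.exp (θ₁ * Complex.I) • ψ) (Complex.exp (θ₂ * Complex.I) • φ)
        = Complex.exp (θ * Complex.I) • supVec α β χ ψ φ := by
  intro θ₁ θ₂ θ₃
  refine ⟨θ₁ + θ₂ - θ₃, ?_⟩
  have key : ∀ t : ℝ, ‖Complex.exp (t * Complex.I)‖ = 1 := fun t => by
    simpa using Complex.abs_exp_ofReal_mul_I t
  have conjkey : ∀ t : ℝ, (starRingEnd ℂ) (Complex.exp (t * Complex.I))
      = Complex.exp (-(t * Complex.I)) := fun t => by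
    rw [← Complex.exp_conj]; congr 1; simp
  have ne : ∀ t : ℝ, Complex.exp (t * Complex.I) ≠ 0 := fun t => Complex.exp_ne_zero _
  simp only [supVec, inner_smul_left, inner_smul_right, conjkey, norm_mul, key,
     smul_add, smul_smul]
  rw [show ((θ₁ + θ₂ - θ₃ : ℝ) : ℂ) * Complex.I
      = θ₁ * Complex.I + θ₂ * Complex.I + (-(θ₃ * Complex.I)) by push_cast; ring,
    Complex.exp_add, Complex.exp_add]
  have habs : ∀ t : ℝ, ‖Complex.exp (-(t * Complex.I))‖ = 1 := fun t => by
    rw [Complex.norm_exp]; simp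
  congr 1 <;> · congr 1; simp only [habs, one_mul]; ring
end

section
/- For unit vectors ψ, φ, χ with ⟨χ|ψ⟩ ≠ 0, ⟨χ|φ⟩ ≠ 0 and Ψ = α(⟨χ|φ⟩/|⟨χ|φ⟩|)ψ + β(⟨χ|ψ⟩/|⟨χ|ψ⟩|)φ, one has |Ψ⟩⟨Ψ| = |α|²P_ψ + |β|²P_φ + ( αβ̄ · P_ψ P_χ P_φ / √(tr(P_ψP_χ)·tr(P_φP_χ)) + h.c. ), where P_v = |v⟩⟨v| and h.c. denotes the adjoint of the preceding term. -/
/-- The rank-one operator `|v⟩⟨v| : x ↦ ⟨v|x⟩ v`. -/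
noncomputable def rankOne {H : Type*} [NormedAddCommGroup H] [InnerProductSpace ℂ H]
    (v : H) : H →ₗ[ℂ] H where
  toFun x := (inner ℂ v x : ℂ) • v
  map_add' x y := by simp [inner_add_right, add_smul]
  map_smul' c x := by simp [inner_smul_right, smul_smul]

/-- Explicit formula for the projector onto the superposition
`Ψ = α(⟨χ|φ⟩/|⟨χ|φ⟩|)ψ + β(⟨χ|ψ⟩/|⟨χ|ψ⟩|)φ`:
`|Ψ⟩⟨Ψ| = |α|²P_ψ + |β|²P_φ + (αβ̄ P_ψP_χP_φ/√(tr(P_ψP_χ)tr(P_φP_χ)) + h.c.)`. -/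
theorem supVec_projector_formula
    {H : Type*} [NormedAddCommGroup H] [InnerProductSpace ℂ H]
    (ψ φ χ : H) (hψ : ‖ψ‖ = 1) (hφ : ‖φ‖ = 1) (hχ : ‖χ‖ = 1)
    (h₁ : (inner ℂ χ ψ : ℂ) ≠ 0) (h₂ : (inner ℂ χ φ : ℂ) ≠ 0)
    (α β : ℂ) (hab : ‖α‖ ^ 2 + ‖β‖ ^ 2 = 1) :
    rankOne ((α * ((inner ℂ χ φ : ℂ) / (‖(inner ℂ χ φ : ℂ)‖ : ℂ))) • ψ
        + (β * ((inner ℂ χ ψ : ℂ) / (‖(inner ℂ χ ψ : ℂ)‖ : ℂ))) • φ)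
      = ((‖α‖ ^ 2 : ℝ) : ℂ) • rankOne ψ + ((‖β‖ ^ 2 : ℝ) : ℂ) • rankOne φ
        + ((α * starRingEnd ℂ β / ((‖(inner ℂ χ ψ : ℂ)‖ * ‖(inner ℂ χ φ : ℂ)‖ : ℝ) : ℂ)) •
            (rankOne ψ ∘ₗ rankOne χ ∘ₗ rankOne φ)
          + (starRingEnd ℂ α * β / ((‖(inner ℂ χ ψ : ℂ)‖ * ‖(inner ℂ χ φ : ℂ)‖ : ℝ) : ℂ)) •
            (rankOne φ ∘ₗ rankOne χ ∘ₗ rankOne ψ)) := by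
  ext x
  simp only [rankOne, LinearMap.coe_mk, AddHom.coe_mk, LinearMap.add_apply, LinearMap.smul_apply,
    LinearMap.comp_apply, inner_add_left, inner_smul_left, smul_add, smul_smul, inner_smul_right,
    map_mul, map_div₀, Complex.conj_ofReal]
  have hnψ : ((‖(inner ℂ χ ψ : ℂ)‖ : ℝ) : ℂ) ≠ 0 := by simpa using norm_ne_zero_iff.2 h₁
  have hnφ : ((‖(inner ℂ χ φ : ℂ)‖ : ℝ) : ℂ) ≠ 0 := by simpa using norm_ne_zero_iff.2 h₂
  have m1 : (inner ℂ χ ψ : ℂ) * starRingEnd ℂ (inner ℂ χ ψ) = ((‖(inner ℂ χ ψ : ℂ)‖ : ℝ) : ℂ) ^ 2 :=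
    Complex.mul_conj' _
  have m2 : (inner ℂ χ φ : ℂ) * starRingEnd ℂ (inner ℂ χ φ) = ((‖(inner ℂ χ φ : ℂ)‖ : ℝ) : ℂ) ^ 2 :=
    Complex.mul_conj' _
  have cψ : (inner ℂ ψ χ : ℂ) = (starRingEnd ℂ) (inner ℂ χ ψ : ℂ) := (inner_conj_symm _ _).symm
  have cφ : (inner ℂ φ χ : ℂ) = (starRingEnd ℂ) (inner ℂ χ φ : ℂ) := (inner_conj_symm _ _).symm
  rw [cψ, cφ]
  have i1 : (((‖(inner ℂ χ ψ : ℂ)‖ : ℝ) : ℂ))⁻¹ * ((‖(inner ℂ χ ψ : ℂ)‖ : ℝ) : ℂ) = 1 :=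
    inv_mul_cancel₀ hnψ
  have i2 : (((‖(inner ℂ χ φ : ℂ)‖ : ℝ) : ℂ))⁻¹ * ((‖(inner ℂ χ φ : ℂ)‖ : ℝ) : ℂ) = 1 :=
    inv_mul_cancel₀ hnφ
  match_scalars
  · linear_combination
      (starRingEnd ℂ α * α * (inner ℂ ψ x : ℂ) * (((‖(inner ℂ χ φ : ℂ)‖ : ℝ) : ℂ))⁻¹ ^ 2) * m2
      + (starRingEnd ℂ α * α * (inner ℂ ψ x : ℂ) *
          ((((‖(inner ℂ χ φ : ℂ)‖ : ℝ) : ℂ))⁻¹ * ((‖(inner ℂ χ φ : ℂ)‖ : ℝ) : ℂ) + 1)) * i2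
      + (inner ℂ ψ x : ℂ) * Complex.mul_conj' α
  · linear_combination
      (starRingEnd ℂ β * β * (inner ℂ φ x : ℂ) * (((‖(inner ℂ χ ψ : ℂ)‖ : ℝ) : ℂ))⁻¹ ^ 2) * m1
      + (starRingEnd ℂ β * β * (inner ℂ φ x : ℂ) *
          ((((‖(inner ℂ χ ψ : ℂ)‖ : ℝ) : ℂ))⁻¹ * ((‖(inner ℂ χ ψ : ℂ)‖ : ℝ) : ℂ) + 1)) * i1
      + (inner ℂ φ x : ℂ) * Complex.mul_conj' β
end

section
/- Let χ be a fixed unit vector in H, c₁, c₂ ∈ (0,1], and let μ = C(√c₁|0⟩ + √c₂|1⟩) be the normalized qubit vector with C = (c₁+c₂)^{-1/2}. Define V₁ = |0⟩⟨0|⊗I⊗I + |1⟩⟨1|⊗S (S the swap on H⊗H), V₂ = I⊗I⊗|χ⟩⟨χ|, V₃ = |μ⟩⟨μ|⊗I⊗I, and Λ_sup(ρ) = tr₁₃(V₃V₂V₁ ρ V₁†V₂†V₃†). Then for every qubit unit vector ν = α|0⟩+β|1⟩ and all unit vectors ψ, φ ∈ H with |⟨χ|ψ⟩|² = c₁ and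 |⟨χ|φ⟩|² = c₂, Λ_sup(P_ν ⊗ P_ψ ⊗ P_φ) is proportional (with positive factor) to |Ψ⟩⟨Ψ| where Ψ = α(⟨χ|φ⟩/|⟨χ|φ⟩|)ψ + β(⟨χ|ψ⟩/|⟨χ|ψ⟩|)φ. -/
open Matrix

/-- Partial trace over the first and third tensor factors of `ℂ²⊗H⊗H`. -/
noncomputable def ptrace13 {n : ℕ}
    (M : Matrix (Fin 2 × Fin n × Fin n) (Fin 2 × Fin n × Fin n) ℂ) :
    Matrix (Fin n) (Fin n) ℂ :=
  fun i j => ∑ a : Fin 2, ∑ b : Fin n, M (a, i, b) (a, j, b)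

/-- The controlled swap `V₁ = |0⟩⟨0|⊗I⊗I + |1⟩⟨1|⊗S` on `ℂ²⊗H⊗H`. -/
def cswap (n : ℕ) : Matrix (Fin 2 × Fin n × Fin n) (Fin 2 × Fin n × Fin n) ℂ :=
  fun p q => if p.1 = q.1 then
    (if p.1 = 0 then (if p.2 = q.2 then 1 else 0)
      else (if p.2.1 = q.2.2 ∧ p.2.2 = q.2.1 then 1 else 0))
    else 0

/-- `V₂ = I ⊗ I ⊗ |χ⟩⟨χ|`. -/
def projThird {n : ℕ} (χ : Fin n → ℂ) :
    Matrix (Fin 2 × Fin n × Fin n) (Fin 2 × Fin n × Fin n) ℂ :=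
  fun p q => if p.1 = q.1 ∧ p.2.1 = q.2.1 then χ p.2.2 * star (χ q.2.2) else 0

/-- `V₃ = |μ⟩⟨μ| ⊗ I ⊗ I`. -/
def projFirst {n : ℕ} (μ : Fin 2 → ℂ) :
    Matrix (Fin 2 × Fin n × Fin n) (Fin 2 × Fin n × Fin n) ℂ :=
  fun p q => if p.2 = q.2 then μ p.1 * star (μ q.1) else 0

private lemma sandwich' {m : Type*} [Fintype m] (A : Matrix m m ℂ) (w : m → ℂ) :
    A * vecMulVec w (star w) * Aᴴ = vecMulVec (A *ᵥ w) (star (A *ᵥ w)) := by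
  ext i j
  simp only [mul_apply, vecMulVec_apply, mulVec, dotProduct, conjTranspose_apply,
    Pi.star_apply, Finset.sum_mul, Finset.mul_sum, star_sum, star_mul']
  exact Finset.sum_congr rfl fun k _ => Finset.sum_congr rfl fun l _ => by ring

private lemma cswap_mulVec {n : ℕ} (ψ φ : Fin n → ℂ) (α β : ℂ) :
    (cswap n) *ᵥ (fun p => ![α, β] p.1 * ψ p.2.1 * φ p.2.2)
    = fun p => if p.1 = 0 then α * ψ p.2.1 * φ p.2.2 else β * ψ p.2.2 * φ p.2.1 := by
  funext ⟨a, i, j⟩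
  simp only [mulVec, dotProduct, cswap, Fintype.sum_prod_type]
  fin_cases a <;> simp [ite_and]

private lemma projThird_mulVec {n : ℕ} (χ : Fin n → ℂ) (v : Fin 2 × Fin n × Fin n → ℂ) :
    (projThird χ) *ᵥ v = fun p => χ p.2.2 * ∑ l, star (χ l) * v (p.1, p.2.1, l) := by
  funext ⟨a, i, j⟩
  simp only [mulVec, dotProduct, projThird, Fintype.sum_prod_type]
  simp [Finset.mul_sum, ite_and, mul_assoc]

private lemma projFirst_mulVec {n : ℕ} (μ : Fin 2 → ℂ) (v : Fin 2 × Fin n × Fin n → ℂ) :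
    (projFirst μ) *ᵥ v = fun p => μ p.1 * ∑ b : Fin 2, star (μ b) * v (b, p.2.1, p.2.2) := by
  funext ⟨a, i, j⟩
  simp only [mulVec, dotProduct, projFirst, Fintype.sum_prod_type]
  simp [Finset.mul_sum, ite_and, mul_assoc, mul_add]

private lemma u_eq {n : ℕ} (χ ψ φ : Fin n → ℂ) (μ : Fin 2 → ℂ) (hμ : ∀ a, star (μ a) = μ a) (α β : ℂ) :
    (projFirst μ * projThird χ * cswap n) *ᵥ (fun p => ![α, β] p.1 * ψ p.2.1 * φ p.2.2)
    = fun p => μ p.1 * χ p.2.2 *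
        (μ 0 * (α * (star χ ⬝ᵥ φ)) * ψ p.2.1 + μ 1 * (β * (star χ ⬝ᵥ ψ)) * φ p.2.1) := by
  rw [← mulVec_mulVec, ← mulVec_mulVec, cswap_mulVec, projThird_mulVec, projFirst_mulVec]
  funext ⟨a, i, j⟩
  simp only [Fin.sum_univ_two, hμ, dotProduct]
  norm_num
  simp only [Finset.mul_sum, Finset.sum_mul, mul_add]
  congr 1 <;> exact Finset.sum_congr rfl fun x _ => by ring

/-- The superposition protocol `Λ_sup(ρ) = tr₁₃(V₃V₂V₁ ρ (V₃V₂V₁)ᴴ)` maps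
`P_ν⊗P_ψ⊗P_φ` (with `ν = α|0⟩+β|1⟩`, `|⟨χ|ψ⟩|² = c₁`, `|⟨χ|φ⟩|² = c₂`) to a
positive multiple of `|Ψ⟩⟨Ψ|`, `Ψ = α(⟨χ|φ⟩/|⟨χ|φ⟩|)ψ + β(⟨χ|ψ⟩/|⟨χ|ψ⟩|)φ`. -/
theorem superposition_protocol {n : ℕ}
    (χ ψ φ : Fin n → ℂ)
    (hχ : star χ ⬝ᵥ χ = 1) (hψ : star ψ ⬝ᵥ ψ = 1) (hφ : star φ ⬝ᵥ φ = 1)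
    (c₁ c₂ : ℝ) (hc₁ : 0 < c₁) (hc₁' : c₁ ≤ 1) (hc₂ : 0 < c₂) (hc₂' : c₂ ≤ 1)
    (hover₁ : ‖star χ ⬝ᵥ ψ‖ ^ 2 = c₁)
    (hover₂ : ‖star χ ⬝ᵥ φ‖ ^ 2 = c₂)
    (α β : ℂ) (hν : ‖α‖ ^ 2 + ‖β‖ ^ 2 = 1) :
    ∃ t : ℝ, 0 < t ∧
      ptrace13
        ((projFirst (fun a => ((Real.sqrt (c₁ + c₂))⁻¹ : ℂ) *
              ![(Real.sqrt c₁ : ℂ), (Real.sqrt c₂ : ℂ)] a) *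
            projThird χ * cswap n) *
          vecMulVec (fun p => ![α, β] p.1 * ψ p.2.1 * φ p.2.2)
            (star fun p => ![α, β] p.1 * ψ p.2.1 * φ p.2.2) *
          (projFirst (fun a => ((Real.sqrt (c₁ + c₂))⁻¹ : ℂ) *
              ![(Real.sqrt c₁ : ℂ), (Real.sqrt c₂ : ℂ)] a) *
            projThird χ * cswap n)ᴴ)
      = (t : ℂ) • vecMulVec
          (fun i => α * ((star χ ⬝ᵥ φ) / (‖star χ ⬝ᵥ φ‖ : ℂ)) * ψ i
            + β * ((star χ ⬝ᵥ ψ) / (‖star χ ⬝ᵥ ψ‖ : ℂ)) * φ i)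
          (star fun i => α * ((star χ ⬝ᵥ φ) / (‖star χ ⬝ᵥ φ‖ : ℂ)) * ψ i
            + β * ((star χ ⬝ᵥ ψ) / (‖star χ ⬝ᵥ ψ‖ : ℂ)) * φ i) := by
  
  have h12 : (0:ℝ) < c₁ + c₂ := by linarith
  set μv : Fin 2 → ℂ := fun a => ((Real.sqrt (c₁ + c₂))⁻¹ : ℂ) *
      ![(Real.sqrt c₁ : ℂ), (Real.sqrt c₂ : ℂ)] a with hμv
  have hμstar : ∀ a, star (μv a) = μv a := by
    intro a; fin_cases a <;>
      simp [hμv, star_mul', Complex.conj_ofReal, mul_comm]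
  have e1 : ((Real.sqrt c₁ : ℝ) : ℂ) * ((Real.sqrt c₁ : ℝ) : ℂ) = (c₁ : ℂ) := by
    rw [← Complex.ofReal_mul, Real.mul_self_sqrt hc₁.le]
  have e2 : ((Real.sqrt c₂ : ℝ) : ℂ) * ((Real.sqrt c₂ : ℝ) : ℂ) = (c₂ : ℂ) := by
    rw [← Complex.ofReal_mul, Real.mul_self_sqrt hc₂.le]
  have e3 : ((Real.sqrt (c₁ + c₂) : ℝ) : ℂ) * ((Real.sqrt (c₁ + c₂) : ℝ) : ℂ)
      = (c₁ : ℂ) + (c₂ : ℂ) := by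
    rw [← Complex.ofReal_mul, Real.mul_self_sqrt h12.le]; push_cast; ring
  have n1 : ((Real.sqrt c₁ : ℝ) : ℂ) ≠ 0 := by
    simp [Complex.ofReal_ne_zero, Real.sqrt_ne_zero', hc₁]
  have n2 : ((Real.sqrt c₂ : ℝ) : ℂ) ≠ 0 := by
    simp [Complex.ofReal_ne_zero, Real.sqrt_ne_zero', hc₂]
  have n3 : ((Real.sqrt (c₁ + c₂) : ℝ) : ℂ) ≠ 0 := by
    simp [Complex.ofReal_ne_zero, Real.sqrt_ne_zero', h12]
  have hμ1 : ∑ a : Fin 2, μv a * star (μv a) = 1 := by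
    simp only [Fin.sum_univ_two, hμstar, hμv]
    simp only [Matrix.cons_val_zero, Matrix.cons_val_one, Matrix.head_cons]
    field_simp
    simp only [Complex.star_def, map_div₀, Complex.conj_ofReal]
    rw [mul_div_assoc', mul_div_assoc', ← add_div, div_eq_iff n3, e1, e2, e3]
  have hχ1 : ∑ b, χ b * star (χ b) = 1 := by
    simpa [dotProduct, mul_comm] using hχ
  have habs₁ : ‖star χ ⬝ᵥ ψ‖ = Real.sqrt c₁ := by
    rw [← hover₁, Real.sqrt_sq (norm_nonneg _)]
  have habs₂ : ‖star χ ⬝ᵥ φ‖ = Real.sqrt c₂ := by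
    rw [← hover₂, Real.sqrt_sq (norm_nonneg _)]
  refine ⟨c₁ * c₂ / (c₁ + c₂), by positivity, ?_⟩
  rw [sandwich', u_eq χ ψ φ μv hμstar α β]
  ext i j
  simp only [ptrace13, vecMulVec_apply, Pi.star_apply, Matrix.smul_apply, smul_eq_mul]
  have hsum : ∀ (X Y : ℂ), (∑ a : Fin 2, ∑ b, (μv a * χ b * X) * star (μv a * χ b * Y))
      = X * star Y := by
    intro X Y
    have : (∑ a : Fin 2, ∑ b, (μv a * χ b * X) * star (μv a * χ b * Y))
        = (∑ a : Fin 2, μv a * star (μv a)) * (∑ b, χ b * star (χ b)) * (X * star Y) := by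
      rw [Finset.sum_mul_sum]
      simp only [Finset.sum_mul]
      refine Finset.sum_congr rfl fun a _ => Finset.sum_congr rfl fun b _ => by
        simp only [star_mul']; ring
    rw [this, hμ1, hχ1]; ring
  rw [hsum]
  rw [habs₁, habs₂]
  simp only [hμv, Matrix.cons_val_zero, Matrix.cons_val_one, Matrix.head_cons,
    star_add, star_mul', star_div₀, star_inv₀, Complex.star_def, Complex.conj_ofReal]
  push_cast
  rw [← e3, ← e1, ← e2]
  field_simp
end

section
/- Let χ be a unit vector in H and let ψ = (1/√2)(χ + ψ⊥), φ = (1/√2)(χ + φ⊥) where ψ⊥, φ⊥ are unit vectors orthogonal to χ. Then with α = β = 1/√2 and c₁ = c₂ = 1/2, the superposition vector Ψ = α(⟨χ|φ⟩/|⟨χ|φ⟩|)ψ + β(⟨χ|ψ⟩/|⟨χ|ψ⟩|)φ is proportional to χ + (1/2)(ψ⊥ + φ⊥), and the success probability (c₁c₂/(c₁+c₂))‖Ψ‖² equals (1/4)(1 + (1/4)‖ψ⊥+φ⊥‖²), which is at least 1/4. -/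
/-- Encoding computation results: for `ψ = (χ+ψ⊥)/√2`, `φ = (χ+φ⊥)/√2` with
`ψ⊥, φ⊥ ⊥ χ` unit, and `α = β = 1/√2` (so `c₁ = c₂ = 1/2`), the superposition
`Ψ = α(⟨χ|φ⟩/|⟨χ|φ⟩|)ψ + β(⟨χ|ψ⟩/|⟨χ|ψ⟩|)φ` is proportional to
`χ + (ψ⊥+φ⊥)/2`, and the success probability `(c₁c₂/(c₁+c₂))‖Ψ‖²` equals
`(1/4)(1 + ‖ψ⊥+φ⊥‖²/4) ≥ 1/4`. -/
theorem encoded_superposition_of_computations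
    {H : Type*} [NormedAddCommGroup H] [InnerProductSpace ℂ H]
    (χ ψp φp : H) (hχ : ‖χ‖ = 1) (hψp : ‖ψp‖ = 1) (hφp : ‖φp‖ = 1)
    (hψo : (inner ℂ χ ψp : ℂ) = 0) (hφo : (inner ℂ χ φp : ℂ) = 0)
    (ψ φ : H)
    (hψ : ψ = ((Real.sqrt 2 : ℂ))⁻¹ • (χ + ψp))
    (hφ : φ = ((Real.sqrt 2 : ℂ))⁻¹ • (χ + φp)) :
    (∃ c : ℂ, c ≠ 0 ∧
        (((Real.sqrt 2 : ℂ))⁻¹ * ((inner ℂ χ φ : ℂ) / (‖(inner ℂ χ φ : ℂ)‖ : ℂ))) • ψ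
          + (((Real.sqrt 2 : ℂ))⁻¹ * ((inner ℂ χ ψ : ℂ) / (‖(inner ℂ χ ψ : ℂ)‖ : ℂ))) • φ
        = c • (χ + (2 : ℂ)⁻¹ • (ψp + φp)))
    ∧ ((1 / 2 * (1 / 2) / (1 / 2 + 1 / 2)) *
        ‖(((Real.sqrt 2 : ℂ))⁻¹ * ((inner ℂ χ φ : ℂ) / (‖(inner ℂ χ φ : ℂ)‖ : ℂ))) • ψ
          + (((Real.sqrt 2 : ℂ))⁻¹ * ((inner ℂ χ ψ : ℂ) / (‖(inner ℂ χ ψ : ℂ)‖ : ℂ))) • φ‖ ^ 2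
        = 1 / 4 * (1 + 1 / 4 * ‖ψp + φp‖ ^ 2))
    ∧ (1 / 4 : ℝ) ≤ (1 / 2 * (1 / 2) / (1 / 2 + 1 / 2)) *
        ‖(((Real.sqrt 2 : ℂ))⁻¹ * ((inner ℂ χ φ : ℂ) / (‖(inner ℂ χ φ : ℂ)‖ : ℂ))) • ψ
          + (((Real.sqrt 2 : ℂ))⁻¹ * ((inner ℂ χ ψ : ℂ) / (‖(inner ℂ χ ψ : ℂ)‖ : ℂ))) • φ‖ ^ 2 := by
  have hs2 : (0:ℝ) < Real.sqrt 2 := Real.sqrt_pos.2 (by norm_num)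
  have hs2c : ((Real.sqrt 2 : ℂ)) ≠ 0 := by
    exact_mod_cast (ne_of_gt hs2)
  have hχχ : (inner ℂ χ χ : ℂ) = 1 := by
    rw [inner_self_eq_norm_sq_to_K, hχ]; norm_num
  have hiψ : (inner ℂ χ ψ : ℂ) = ((Real.sqrt 2 : ℂ))⁻¹ := by
    rw [hψ, inner_smul_right, inner_add_right, hχχ, hψo]
    simp
  have hiφ : (inner ℂ χ φ : ℂ) = ((Real.sqrt 2 : ℂ))⁻¹ := by
    rw [hφ, inner_smul_right, inner_add_right, hχχ, hφo]
    simp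
  have hninv : (‖((Real.sqrt 2 : ℂ))⁻¹‖ : ℂ) = ((Real.sqrt 2 : ℂ))⁻¹ := by
    rw [norm_inv, Complex.norm_real]
    push_cast [abs_of_pos hs2]
    simp
  have hratio : ((inner ℂ χ ψ : ℂ) / (‖(inner ℂ χ ψ : ℂ)‖ : ℂ)) = 1 := by
    rw [hiψ, hninv, div_self (inv_ne_zero hs2c)]
  have hratio' : ((inner ℂ χ φ : ℂ) / (‖(inner ℂ χ φ : ℂ)‖ : ℂ)) = 1 := by
    rw [hiφ, hninv, div_self (inv_ne_zero hs2c)]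
  have hsq : ((Real.sqrt 2 : ℂ))⁻¹ * ((Real.sqrt 2 : ℂ))⁻¹ = (2 : ℂ)⁻¹ := by
    have h : ((Real.sqrt 2 : ℂ)) * ((Real.sqrt 2 : ℂ)) = 2 := by
      norm_cast
      exact Real.mul_self_sqrt (by norm_num)
    rw [← mul_inv, h]
  have hvec : (((Real.sqrt 2 : ℂ))⁻¹ * ((inner ℂ χ φ : ℂ) / (‖(inner ℂ χ φ : ℂ)‖ : ℂ))) • ψ
          + (((Real.sqrt 2 : ℂ))⁻¹ * ((inner ℂ χ ψ : ℂ) / (‖(inner ℂ χ ψ : ℂ)‖ : ℂ))) • φ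
        = χ + (2 : ℂ)⁻¹ • (ψp + φp) := by
    rw [hratio, hratio', hψ, hφ, mul_one, smul_smul, smul_smul, hsq,
      smul_add, smul_add]
    module
  have hnorm : ‖χ + (2 : ℂ)⁻¹ • (ψp + φp)‖ ^ 2 = 1 + 1/4 * ‖ψp + φp‖^2 := by
    have ho : (inner ℂ χ ((2 : ℂ)⁻¹ • (ψp + φp)) : ℂ) = 0 := by
      rw [inner_smul_right, inner_add_right, hψo, hφo]; simp
    have h := norm_add_sq_eq_norm_sq_add_norm_sq_of_inner_eq_zero χ _ ho
    rw [hχ, norm_smul] at h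
    have h2 : ‖(2:ℂ)⁻¹‖ = 1/2 := by
      rw [norm_inv]; norm_num
    rw [h2] at h
    nlinarith [h]
  refine ⟨⟨1, one_ne_zero, by rw [hvec, one_smul]⟩, ?_, ?_⟩
  · rw [hvec, hnorm]; ring
  · rw [hvec, hnorm]; nlinarith [sq_nonneg ‖ψp + φp‖]
end

section
/- Let χ be a unit vector and d ≥ 2. For unit vectors ψ₁,…,ψ_d with ⟨χ|ψ_i⟩ ≠ 0 for all i, and coefficients α₁,…,α_d ∈ ℂ, the vector Ψ_d = Σ_i α_i ( Π_{k≠i} ⟨χ|ψ_k⟩ / Π_{k≠i} |⟨χ|ψ_k⟩| ) ψ_i changes only by a global phase when each ψ_j is replaced by e^{iθ_j}ψ_j; hence |Ψ_d⟩⟨Ψ_d| is a well-defined function of the projectors P_{ψ₁},…,P_{ψ_d}. -/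
open Finset

/-- The multi-state superposition
`Ψ_d = Σ_i α_i (Π_{k≠i}⟨χ|ψ_k⟩ / Π_{k≠i}|⟨χ|ψ_k⟩|) ψ_i`. -/
noncomputable def supVecMulti {H : Type*} [NormedAddCommGroup H]
    [InnerProductSpace ℂ H] {d : ℕ} (α : Fin d → ℂ) (χ : H) (ψ : Fin d → H) : H :=
  ∑ i, (α i * (∏ k ∈ univ.erase i, (inner ℂ χ (ψ k) : ℂ))
      / ((∏ k ∈ univ.erase i, ‖(inner ℂ χ (ψ k) : ℂ)‖ : ℝ) : ℂ)) • ψ i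

/-- Phase covariance of the multi-state superposition: replacing each `ψ_j` by
`e^{iθ_j}ψ_j` changes `Ψ_d` only by a global phase; hence `|Ψ_d⟩⟨Ψ_d|` is a
well-defined function of the projectors `P_{ψ₁},…,P_{ψ_d}`. -/
theorem supVecMulti_phase_covariant
    {H : Type*} [NormedAddCommGroup H] [InnerProductSpace ℂ H]
    {d : ℕ} (hd : 2 ≤ d) (χ : H) (hχ : ‖χ‖ = 1)
    (ψ : Fin d → H) (hψ : ∀ i, ‖ψ i‖ = 1)
    (hover : ∀ i, (inner ℂ χ (ψ i) : ℂ) ≠ 0)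
    (α : Fin d → ℂ) (hα : ∑ i, ‖α i‖ ^ 2 = 1) :
    ∀ θ : Fin d → ℝ, ∃ θ₀ : ℝ,
      supVecMulti α χ (fun j => Complex.exp (θ j * Complex.I) • ψ j)
        = Complex.exp (θ₀ * Complex.I) • supVecMulti α χ ψ := by
  intro θ
  refine ⟨∑ j, θ j, ?_⟩
  unfold supVecMulti
  rw [Finset.smul_sum]
  refine Finset.sum_congr rfl fun i _ => ?_
  have hinner : ∀ k, (inner ℂ χ (Complex.exp (θ k * Complex.I) • ψ k) : ℂ)
      = Complex.exp (θ k * Complex.I) * inner ℂ χ (ψ k) :=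
    fun k => inner_smul_right _ _ _
  have hnorm : ∀ k, ‖(inner ℂ χ (Complex.exp (θ k * Complex.I) • ψ k) : ℂ)‖
      = ‖(inner ℂ χ (ψ k) : ℂ)‖ := by
    intro k
    rw [hinner k, norm_mul, Complex.norm_exp_ofReal_mul_I, one_mul]
  simp only [hinner, norm_mul, Complex.norm_exp_ofReal_mul_I, one_mul,
    Finset.prod_mul_distrib]
  rw [smul_smul, smul_smul]
  congr 1
  have hexp : Complex.exp ((∑ j, θ j : ℝ) * Complex.I)
      = Complex.exp ((θ i : ℂ) * Complex.I)
        * ∏ k ∈ univ.erase i, Complex.exp ((θ k : ℂ) * Complex.I) := by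
    rw [← Complex.exp_sum, ← Complex.exp_add, ← Finset.add_sum_erase _ _ (mem_univ i),
      ← Finset.sum_mul]
    push_cast
    rw [add_mul]
  rw [hexp]
  ring
end

section
/- With Ψ_d = Σ_i α_i (Π_{k≠i}⟨χ|ψ_k⟩ / Π_{k≠i}|⟨χ|ψ_k⟩|) ψ_i, one has |Ψ_d⟩⟨Ψ_d| = Σ_i |α_i|² P_{ψ_i} + Σ_{i≠j} α_i ᾱ_j P_{ψ_i} M_{ij} P_{ψ_j} / ( √(Π_{k≠i} tr(P_χP_{ψ_k})) · √(Π_{l≠j} tr(P_χP_{ψ_l})) ), where M_{ij} = P_χ Π_{k≠i, k≠j}(P_χ P_{ψ_k} P_χ) and the empty product is the identity. -/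
open Finset

lemma conj_mul_self (z : ℂ) : starRingEnd ℂ z * z = ((‖z‖ ^ 2 : ℝ) : ℂ) := by
  rw [RCLike.conj_mul]; norm_num

lemma key_prod {d : ℕ} (f : Fin d → ℂ) {i j : Fin d} (hij : j ≠ i) :
    (∏ k ∈ univ.erase i, f k) * (∏ l ∈ univ.erase j, starRingEnd ℂ (f l))
      = f j * starRingEnd ℂ (f i) *
        ∏ k ∈ (univ.erase i).erase j, (f k * starRingEnd ℂ (f k)) := by
  have hj : j ∈ univ.erase i := mem_erase.2 ⟨hij, mem_univ j⟩
  have hi : i ∈ univ.erase j := mem_erase.2 ⟨fun h => hij h.symm, mem_univ i⟩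
  rw [← Finset.mul_prod_erase _ f hj, ← Finset.mul_prod_erase _ _ hi,
    Finset.erase_right_comm, Finset.prod_mul_distrib]
  ring

/-- Explicit formula for the projector onto the multi-state superposition:
`|Ψ_d⟩⟨Ψ_d| = Σ_i |α_i|² P_{ψ_i}
 + Σ_{i≠j} α_i ᾱ_j P_{ψ_i} M_{ij} P_{ψ_j} / (√(Π_{k≠i}tr(P_χP_{ψ_k}))·√(Π_{l≠j}tr(P_χP_{ψ_l})))`,
where `M_{ij} = P_χ Π_{k≠i,j}(P_χ P_{ψ_k} P_χ) = (Π_{k≠i,j}⟨χ|ψ_k⟩⟨ψ_k|χ⟩)·P_χ`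
(the empty product being the identity). -/
theorem supVecMulti_projector_formula
    {H : Type*} [NormedAddCommGroup H] [InnerProductSpace ℂ H]
    {d : ℕ} (hd : 2 ≤ d) (χ : H) (hχ : ‖χ‖ = 1)
    (ψ : Fin d → H) (hψ : ∀ i, ‖ψ i‖ = 1)
    (hover : ∀ i, (inner ℂ χ (ψ i) : ℂ) ≠ 0)
    (α : Fin d → ℂ) (hα : ∑ i, ‖α i‖ ^ 2 = 1) :
    rankOne (supVecMulti α χ ψ)
      = ∑ i, ((‖α i‖ ^ 2 : ℝ) : ℂ) • rankOne (ψ i)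
        + ∑ i, ∑ j ∈ univ.erase i,
            ((α i * starRingEnd ℂ (α j)) /
              ((Real.sqrt (∏ k ∈ univ.erase i, ‖(inner ℂ χ (ψ k) : ℂ)‖ ^ 2) *
                Real.sqrt (∏ l ∈ univ.erase j, ‖(inner ℂ χ (ψ l) : ℂ)‖ ^ 2) : ℝ) : ℂ)) •
              (rankOne (ψ i) ∘ₗ
                ((∏ k ∈ (univ.erase i).erase j,
                    ((inner ℂ χ (ψ k) : ℂ) * (inner ℂ (ψ k) χ : ℂ))) • rankOne χ) ∘ₗ
                rankOne (ψ j)) := by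
  classical
  set P : Fin d → ℂ := fun i => ∏ k ∈ univ.erase i, (inner ℂ χ (ψ k) : ℂ) with hP
  set Q : Fin d → ℝ := fun i => ∏ k ∈ univ.erase i, ‖(inner ℂ χ (ψ k) : ℂ)‖ with hQdef
  have hQpos : ∀ i, 0 < Q i := fun i =>
    Finset.prod_pos fun k _ => norm_pos_iff.mpr (hover k)
  have hQne : ∀ i, (Q i : ℂ) ≠ 0 := fun i =>
    Complex.ofReal_ne_zero.mpr (hQpos i).ne'
  have hPQ : ∀ i, starRingEnd ℂ (P i) * P i = ((Q i : ℝ) : ℂ) ^ 2 := fun i => by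
    rw [conj_mul_self]
    norm_cast
    rw [hP, hQdef]
    simp [norm_prod]
  have hsqrt : ∀ i, Real.sqrt (∏ k ∈ univ.erase i, ‖(inner ℂ χ (ψ k) : ℂ)‖ ^ 2) = Q i := by
    intro i
    rw [Finset.prod_pow, Real.sqrt_sq (Finset.prod_nonneg fun k _ => norm_nonneg _)]
  set c : Fin d → ℂ := fun i => α i * P i / (Q i : ℂ) with hc
  have hconj : ∀ k : Fin d, (inner ℂ (ψ k) χ : ℂ) = starRingEnd ℂ (inner ℂ χ (ψ k)) :=
    fun k => (inner_conj_symm (ψ k) χ).symm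
  apply LinearMap.ext
  intro x
  have hL : rankOne (supVecMulti α χ ψ) x
      = ∑ i, ∑ j, (starRingEnd ℂ (c j) * (inner ℂ (ψ j) x : ℂ) * c i) • ψ i := by
    have hΨ : supVecMulti α χ ψ = ∑ i, c i • ψ i := rfl
    simp only [rankOne, LinearMap.coe_mk, AddHom.coe_mk, hΨ]
    rw [Finset.smul_sum]
    refine Finset.sum_congr rfl fun i _ => ?_
    rw [sum_inner, smul_smul]
    simp only [inner_smul_left]
    rw [Finset.sum_mul, Finset.sum_smul]
  rw [hL]
  simp only [LinearMap.add_apply, LinearMap.sum_apply, LinearMap.smul_apply,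
    LinearMap.comp_apply, rankOne, LinearMap.coe_mk, AddHom.coe_mk,
    inner_smul_right, smul_smul, hsqrt]
  rw [← Finset.sum_add_distrib]
  refine Finset.sum_congr rfl fun i _ => ?_
  rw [← Finset.add_sum_erase _ _ (mem_univ i)]
  congr 1
  · -- diagonal term
    have hdiag : starRingEnd ℂ (c i) * c i = ((‖α i‖ ^ 2 : ℝ) : ℂ) := by
      simp only [hc, map_div₀, map_mul, Complex.conj_ofReal]
      rw [div_mul_div_comm,
        show (starRingEnd ℂ (α i) * starRingEnd ℂ (P i)) * (α i * P i)
          = (starRingEnd ℂ (α i) * α i) * (starRingEnd ℂ (P i) * P i) by ring,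
        hPQ i, conj_mul_self,
        div_eq_iff (mul_ne_zero (hQne i) (hQne i))]
      push_cast
      ring
    rw [show starRingEnd ℂ (c i) * (inner ℂ (ψ i) x : ℂ) * c i
        = starRingEnd ℂ (c i) * c i * (inner ℂ (ψ i) x : ℂ) by ring, hdiag]
  · -- off-diagonal sum
    refine Finset.sum_congr rfl fun j hj => ?_
    have hji : j ≠ i := (mem_erase.1 hj).1
    congr 1
    have hk := key_prod (fun k => (inner ℂ χ (ψ k) : ℂ)) hji
    have hPconj : starRingEnd ℂ (P j) = ∏ l ∈ univ.erase j, starRingEnd ℂ (inner ℂ χ (ψ l)) :=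
      map_prod _ _ _
    simp only [hconj, hc, map_div₀, map_mul, Complex.conj_ofReal, hPconj, hP, map_prod]
    push_cast [hconj]
    linear_combination (((Q i : ℝ) : ℂ))⁻¹ * (((Q j : ℝ) : ℂ))⁻¹ *
      (starRingEnd ℂ (α j) * α i * (inner ℂ (ψ j) x : ℂ)) * hk
end
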